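/- arXiv:1002.0113 — 2 statements merged into one kernel-verified Lean document; each statement's English description precedes it below -/
import Mathlib

section
/- Let R be a commutative ring whose Jacobson radical is zero, and let n ≥ 1. Let A be an Azumaya R-algebra that is free of rank n² as an R-module, and let A' be an R-algebra that is generated by n² elements as an R-module and such that for every maximal ideal m of R the fiber A'⧸mA' is nonzero. Then every R-algebra homomorphism f : A → A' is bijective. (Affine form of Lemma 6.2 of the paper; in the paper's proof one reduces to the case where the base is affine and A is free.) -/
open TensorProduct

/-- The natural `R`-linear map `A ⊗[R] Aᵐᵒᵖ → End_R(A)`, `a ⊗ b ↦ (x ↦ a * x * b)`. -/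
noncomputable def tensorMulLeftRight (R A : Type*) [CommRing R] [Ring A] [Algebra R A] :
    A ⊗[R] Aᵐᵒᵖ →ₗ[R] Module.End R A :=
  TensorProduct.lift <|
    LinearMap.mk₂ R
      (fun a b => (LinearMap.mulLeft R a) ∘ₗ (LinearMap.mulRight R b.unop))
      (fun a₁ a₂ b => LinearMap.ext fun x => by simp [add_mul])
      (fun c a b => LinearMap.ext fun x => by simp [smul_mul_assoc])
      (fun a b₁ b₂ => LinearMap.ext fun x => by simp [mul_add])
      (fun c a b => LinearMap.ext fun x => by simp [mul_smul_comm])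

/-- An Azumaya algebra over a commutative ring `R`: an `R`-algebra which is a faithful
finitely generated projective `R`-module such that the natural map
`A ⊗[R] Aᵐᵒᵖ → End_R(A)`, `a ⊗ b ↦ (x ↦ a x b)`, is bijective. -/
structure IsAzumaya' (R A : Type*) [CommRing R] [Ring A] [Algebra R A] : Prop where
  faithful : FaithfulSMul R A
  projective : Module.Projective R A
  finite : Module.Finite R A
  bij : Function.Bijective (tensorMulLeftRight R A)

section Aux

variable {R : Type*} [CommRing R]

lemma tensorMulLeftRight_tmul_apply {A : Type*} [Ring A] [Algebra R A]
    (a : A) (b : Aᵐᵒᵖ) (x : A) :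
    tensorMulLeftRight R A (a ⊗ₜ[R] b) x = a * x * b.unop := by
  simp [tensorMulLeftRight, mul_assoc]

lemma mul_mem_smulTop_left {A : Type*} [Ring A] [Algebra R A] (m : Ideal R) {w : A}
    (hw : w ∈ (m • ⊤ : Submodule R A)) (u : A) : u * w ∈ (m • ⊤ : Submodule R A) := by
  refine Submodule.smul_induction_on hw (fun r hr v _ => ?_) (fun x y hx hy => ?_)
  · rw [mul_smul_comm]; exact Submodule.smul_mem_smul hr trivial
  · rw [mul_add]; exact add_mem hx hy

lemma mul_mem_smulTop_right {A : Type*} [Ring A] [Algebra R A] (m : Ideal R) {w : A}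
    (hw : w ∈ (m • ⊤ : Submodule R A)) (u : A) : w * u ∈ (m • ⊤ : Submodule R A) := by
  refine Submodule.smul_induction_on hw (fun r hr v _ => ?_) (fun x y hx hy => ?_)
  · rw [smul_mul_assoc]; exact Submodule.smul_mem_smul hr trivial
  · rw [add_mul]; exact add_mem hx hy

lemma repr_mem_of_mem_smulTop {M : Type*} [AddCommGroup M] [Module R M] {ι : Type*}
    (b : Module.Basis ι R M) (I : Ideal R) {x : M} (hx : x ∈ (I • ⊤ : Submodule R M)) (i : ι) :
    b.repr x i ∈ I := by
  refine Submodule.smul_induction_on (p := fun z => b.repr z i ∈ I) hx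
    (fun r hr y _ => ?_) (fun y z hy hz => ?_)
  · show b.repr (r • y) i ∈ I
    rw [map_smul, Finsupp.smul_apply, smul_eq_mul]; exact I.mul_mem_right _ hr
  · show b.repr (y + z) i ∈ I
    rw [map_add, Finsupp.add_apply]; exact add_mem hy hz

/-- Core lemma: the preimage of `m•A'` under `f` is contained in `m•A`. -/
lemma comap_smulTop_le_smulTop {A A' : Type*} [Ring A] [Algebra R A] [Ring A'] [Algebra R A']
    {ι : Type*} [Fintype ι] (b : Module.Basis ι R A)
    (hsurj : Function.Surjective (tensorMulLeftRight R A))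
    (m : Ideal R) (hm : m.IsMaximal)
    (hfib : Nontrivial (A' ⧸ (m • ⊤ : Submodule R A')))
    (f : A →ₐ[R] A') {x : A} (hx : f x ∈ (m • ⊤ : Submodule R A')) :
    x ∈ (m • ⊤ : Submodule R A) := by
  by_contra hxm
  obtain ⟨i, hi⟩ : ∃ i, b.repr x i ∉ m := by
    by_contra h
    push_neg at h
    exact hxm (by
      rw [← b.sum_repr x]
      exact Submodule.sum_mem _ fun i _ => Submodule.smul_mem_smul (h i) trivial)
  have key : ∀ t : A ⊗[R] Aᵐᵒᵖ, f (tensorMulLeftRight R A t x) ∈ (m • ⊤ : Submodule R A') := by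
    intro t
    induction t using TensorProduct.induction_on with
    | zero => simpa using Submodule.zero_mem _
    | tmul a y =>
        rw [tensorMulLeftRight_tmul_apply, map_mul, map_mul]
        exact mul_mem_smulTop_right m (mul_mem_smulTop_left m hx (f a)) (f y.unop)
    | add u v hu hv =>
        rw [map_add, LinearMap.add_apply, map_add]
        exact add_mem hu hv
  obtain ⟨t, ht⟩ := hsurj ((b.coord i).smulRight (1 : A))
  have hc1 : f (b.repr x i • (1 : A)) ∈ (m • ⊤ : Submodule R A') := by
    have h := key t
    rw [ht] at h
    simpa [LinearMap.smulRight_apply, Module.Basis.coord_apply] using h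
  rw [map_smul, map_one] at hc1
  obtain ⟨y, i0, hi0, hy⟩ := hm.exists_inv hi
  have h1 : (1 : A') ∈ (m • ⊤ : Submodule R A') := by
    have e : (1 : A') = y • (b.repr x i • (1 : A')) + i0 • (1 : A') := by
      rw [smul_smul, ← add_smul, hy, one_smul]
    rw [e]
    exact add_mem (Submodule.smul_mem _ _ hc1) (Submodule.smul_mem_smul hi0 trivial)
  have htop : (m • ⊤ : Submodule R A') = ⊤ := by
    rw [eq_top_iff]
    intro z _
    simpa using mul_mem_smulTop_left m h1 z
  haveI := Submodule.Quotient.subsingleton_iff.mpr htop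
  exact false_of_nontrivial_of_subsingleton (A' ⧸ (m • ⊤ : Submodule R A'))

end Aux

/-- Affine form of Lemma 6.2 of the paper: over a commutative ring `R` with vanishing
Jacobson radical, any `R`-algebra homomorphism from an Azumaya algebra `A` free of rank `n²`
to an algebra `A'` generated by `n²` elements as an `R`-module all of whose fibers at
maximal ideals are nonzero is bijective. -/
theorem algHom_bijective_of_isAzumaya
    {R A A' : Type*} [CommRing R]
    [Ring A] [Algebra R A] [Ring A'] [Algebra R A']
    (hJ : (⊥ : Ideal R).jacobson = ⊥)
    (n : ℕ) (hn : 1 ≤ n)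
    (hAz : IsAzumaya' R A)
    (hfree : Nonempty (Module.Basis (Fin (n ^ 2)) R A))
    (hgen : ∃ s : Finset A', s.card = n ^ 2 ∧ Submodule.span R (s : Set A') = ⊤)
    (hfib : ∀ (m : Ideal R), m.IsMaximal →
      Nontrivial (A' ⧸ (m • ⊤ : Submodule R A')))
    (f : A →ₐ[R] A') :
    Function.Bijective f := by
  classical
  obtain ⟨b⟩ := hfree
  have hsurjT : Function.Surjective (tensorMulLeftRight R A) := hAz.bij.surjective
  have core : ∀ (m : Ideal R), m.IsMaximal → ∀ x : A,
      f x ∈ (m • ⊤ : Submodule R A') → x ∈ (m • ⊤ : Submodule R A) :=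
    fun m hm x hx => comap_smulTop_le_smulTop b hsurjT m hm (hfib m hm) f hx
  constructor
  · -- injectivity
    rw [injective_iff_map_eq_zero]
    intro x hx
    have hall : ∀ (m : Ideal R), m.IsMaximal → x ∈ (m • ⊤ : Submodule R A) :=
      fun m hm => core m hm x (by rw [hx]; exact Submodule.zero_mem _)
    have hrepr : ∀ i, b.repr x i = 0 := by
      intro i
      have hmem : b.repr x i ∈ (⊥ : Ideal R).jacobson := by
        rw [Ideal.jacobson]
        refine Ideal.mem_sInf.mpr fun {J} hJ' => ?_
        exact repr_mem_of_mem_smulTop b J (hall J hJ'.2) i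
      rw [hJ] at hmem
      exact hmem
    rw [← b.sum_repr x]
    simp [hrepr]
  · -- surjectivity
    obtain ⟨s, hscard, hsspan⟩ := hgen
    haveI hfinA' : Module.Finite R A' := ⟨⟨s, hsspan⟩⟩
    haveI : Nonempty (Fin (n ^ 2)) := ⟨⟨0, pow_pos hn 2⟩⟩
    have key : ∀ (m : Ideal R), m.IsMaximal →
        LinearMap.range f.toLinearMap ⊔ (m • ⊤ : Submodule R A') = ⊤ := by
      intro m hm
      haveI := hm
      haveI := hfib m hm
      haveI : Nontrivial (R ⧸ m) := Ideal.Quotient.nontrivial_iff.mpr hm.ne_top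
      let π := (m • ⊤ : Submodule R A').mkQ
      haveI : IsScalarTower R (R ⧸ m) (A' ⧸ (m • ⊤ : Submodule R A')) :=
        Module.IsTorsionBySet.isScalarTower (Module.isTorsionBySet_quotient_ideal_smul A' m)
      have hWspanR : Submodule.span R (π '' ↑s) = ⊤ := by
        rw [Submodule.span_image, hsspan, Submodule.map_top, Submodule.range_mkQ]
      have hWspan : Submodule.span (R ⧸ m) (π '' ↑s) = ⊤ := by
        rw [eq_top_iff]
        intro w _
        have hw : w ∈ Submodule.span R (π '' ↑s) := hWspanR ▸ Submodule.mem_top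
        exact Submodule.span_subset_span R (R ⧸ m) _ hw
      haveI hWfin : Module.Finite (R ⧸ m) (A' ⧸ (m • ⊤ : Submodule R A')) :=
        ⟨⟨s.image π, by rw [Finset.coe_image]; exact hWspan⟩⟩
      have hrange : Set.range (fun a : ↥s => π (a : A')) = π '' ↑s := by
        ext w
        simp [Set.mem_image]
      have hfr_le : Module.finrank (R ⧸ m) (A' ⧸ (m • ⊤ : Submodule R A')) ≤ n ^ 2 := by
        have h := finrank_le_of_span_eq_top (v := fun a : ↥s => π (a : A'))
          (by rw [hrange]; exact hWspan)
        rwa [Fintype.card_coe, hscard] at h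
      set w : Fin (n ^ 2) → A' ⧸ (m • ⊤ : Submodule R A') := fun i => π (f (b i)) with hwdef
      have hli : LinearIndependent (R ⧸ m) w := by
        rw [Fintype.linearIndependent_iff]
        intro g hg
        choose r hr using fun i => Ideal.Quotient.mk_surjective (g i)
        set x : A := ∑ i, r i • b i with hxdef
        have hπfx : π (f x) = 0 := by
          have : π (f x) = ∑ i, g i • w i := by
            rw [hxdef, map_sum, map_sum]
            refine Finset.sum_congr rfl fun i _ => ?_
            rw [map_smul, map_smul]
            rw [← hr i]
            rfl
          rw [this, hg]
        have hfx : f x ∈ (m • ⊤ : Submodule R A') := by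
          rwa [Submodule.mkQ_apply, Submodule.Quotient.mk_eq_zero] at hπfx
        have hx : x ∈ (m • ⊤ : Submodule R A) := core m hm x hfx
        intro i
        have hri : r i ∈ m := by
          have h := repr_mem_of_mem_smulTop b m hx i
          rwa [hxdef, b.repr_sum_self] at h
        rw [← hr i, Ideal.Quotient.eq_zero_iff_mem]
        exact hri
      have hfr_ge : n ^ 2 ≤ Module.finrank (R ⧸ m) (A' ⧸ (m • ⊤ : Submodule R A')) := by
        have h := hli.fintype_card_le_finrank
        rwa [Fintype.card_fin] at h
      have hspanw : Submodule.span (R ⧸ m) (Set.range w) = ⊤ := by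
        letI : Field (R ⧸ m) := Ideal.Quotient.field m
        exact hli.span_eq_top_of_card_eq_finrank
          (by rw [Fintype.card_fin]; exact le_antisymm hfr_ge hfr_le)
      rw [eq_top_iff]
      intro z _
      have hz : π z ∈ Submodule.span (R ⧸ m) (Set.range w) := hspanw ▸ Submodule.mem_top
      rw [Submodule.mem_span_range_iff_exists_fun] at hz
      obtain ⟨c, hc⟩ := hz
      choose r hr using fun i => Ideal.Quotient.mk_surjective (c i)
      have hcomb : π (∑ i, r i • f (b i)) = π z := by
        rw [map_sum, ← hc]
        refine Finset.sum_congr rfl fun i _ => ?_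
        rw [map_smul, ← hr i]
        rfl
      have hdiff : z - ∑ i, r i • f (b i) ∈ (m • ⊤ : Submodule R A') := by
        rw [← Submodule.Quotient.mk_eq_zero, ← Submodule.mkQ_apply, map_sub]
        show π z - π (∑ i, r i • f (b i)) = 0
        rw [hcomb, sub_self]
      have hmem : (∑ i, r i • f (b i)) ∈ LinearMap.range f.toLinearMap := by
        refine ⟨∑ i, r i • b i, ?_⟩
        rw [map_sum]
        exact Finset.sum_congr rfl fun i _ => by rw [map_smul]; rfl
      have : z = (∑ i, r i • f (b i)) + (z - ∑ i, r i • f (b i)) := by abel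
      rw [this]
      exact Submodule.add_mem_sup hmem hdiff
    -- Nakayama on the cokernel
    set T := LinearMap.range f.toLinearMap with hT
    have hallzero : ∀ q : A' ⧸ T, q = 0 := by
      have hann : ∀ (m : Ideal R), m.IsMaximal →
          ∃ r : R, r - 1 ∈ m ∧ ∀ q : A' ⧸ T, r • q = 0 := by
        intro m hm
        have htop : (⊤ : Submodule R (A' ⧸ T)) ≤ m • ⊤ := by
          intro q _
          obtain ⟨z, rfl⟩ := T.mkQ_surjective q
          have hz : z ∈ T ⊔ (m • ⊤ : Submodule R A') := Submodule.eq_top_iff'.mp (key m hm) z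
          obtain ⟨u, hu, v, hv, rfl⟩ := Submodule.mem_sup.mp hz
          have h1 : T.mkQ u = 0 := by rwa [Submodule.mkQ_apply, Submodule.Quotient.mk_eq_zero]
          have h2 : T.mkQ v ∈ (m • ⊤ : Submodule R (A' ⧸ T)) := by
            have : T.mkQ v ∈ Submodule.map T.mkQ (m • ⊤ : Submodule R A') :=
              Submodule.mem_map_of_mem hv
            rw [Submodule.map_smul''] at this
            exact (smul_mono_right m le_top : m • Submodule.map T.mkQ ⊤ ≤ m • ⊤) this
          rw [map_add, h1, zero_add]
          exact h2
        obtain ⟨r, hr1, hr0⟩ :=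
          Submodule.exists_sub_one_mem_and_smul_eq_zero_of_fg_of_le_smul m ⊤
            (Module.Finite.fg_top) htop
        exact ⟨r, hr1, fun q => hr0 q Submodule.mem_top⟩
      have hI : (⊤ : Submodule R (A' ⧸ T)).annihilator = ⊤ := by
        by_contra hItop
        obtain ⟨m, hm, hIm⟩ := Ideal.exists_le_maximal _ hItop
        obtain ⟨r, hr1, hr0⟩ := hann m hm
        have hrI : r ∈ (⊤ : Submodule R (A' ⧸ T)).annihilator :=
          Submodule.mem_annihilator.mpr fun q _ => hr0 q
        have h1m : (1 : R) ∈ m := by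
          have := m.sub_mem (hIm hrI) hr1
          simpa using this
        exact hm.ne_top (Ideal.eq_top_of_unit_mem m 1 1 h1m (mul_one 1))
      intro q
      have h1 : (1 : R) ∈ (⊤ : Submodule R (A' ⧸ T)).annihilator := hI ▸ Submodule.mem_top
      have := Submodule.mem_annihilator.mp h1 q Submodule.mem_top
      simpa using this
    intro y
    have : T.mkQ y = 0 := hallzero _
    rw [Submodule.mkQ_apply, Submodule.Quotient.mk_eq_zero] at this
    obtain ⟨x, hx⟩ := this
    exact ⟨x, hx⟩
end

section
/- Let R be a commutative ring whose Jacobson radical is zero. Let M be a free R-module, N an R-module, and F : M → N an R-linear map such that for every maximal ideal m of R the induced map M⧸mM → N⧸mN is injective. Then F is injective. (Injectivity step in the proof of Lemma 6.2: Ker F is contained in mM for every maximal ideal m, and for a free module the intersection of the submodules mM over all maximal ideals m is zero when the Jacobson radical of R is zero.) -/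
lemma repr_mem_of_mem_smul_top {R M : Type*} [CommRing R] [AddCommGroup M] [Module R M]
    {ι : Type*} (b : Module.Basis ι R M) (I : Ideal R) {x : M} (hx : x ∈ (I • ⊤ : Submodule R M))
    (i : ι) : b.repr x i ∈ I := by
  classical
  rw [← b.span_eq, ← Set.image_univ, Set.image_eq_range] at hx
  obtain ⟨a, ha, rfl⟩ := (Submodule.mem_ideal_smul_span_iff_exists_sum I _ _).mp hx
  rw [map_finsuppSum]
  simp only [map_smul, Module.Basis.repr_self]
  rw [Finsupp.sum_apply]
  refine Submodule.sum_mem _ fun j _ => ?_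
  dsimp only
  rw [Finsupp.smul_apply, Finsupp.single_apply]
  classical
  split <;> simp [ha j, I.zero_mem]

/-- The injectivity step in the proof of Lemma 6.2 of the paper: over a commutative ring `R`
with vanishing Jacobson radical, a linear map `F : M → N` from a free module which is
injective on the fibers `M⧸mM → N⧸mN` at every maximal ideal `m` is itself injective. -/
theorem injective_of_injective_fibers
    {R M N : Type*} [CommRing R]
    [AddCommGroup M] [Module R M] [Module.Free R M]
    [AddCommGroup N] [Module R N]
    (hJ : (⊥ : Ideal R).jacobson = ⊥)
    (F : M →ₗ[R] N)
    (hfib : ∀ (m : Ideal R), m.IsMaximal →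
      Function.Injective
        (Submodule.mapQ (m • ⊤ : Submodule R M) (m • ⊤ : Submodule R N) F
          (by rw [← Submodule.map_le_iff_le_comap, Submodule.map_smul'']
              exact Submodule.smul_mono le_rfl le_top))) :
    Function.Injective F := by
  rw [← LinearMap.ker_eq_bot, eq_bot_iff]
  intro x hx
  rw [LinearMap.mem_ker] at hx
  have hmem : ∀ (m : Ideal R), m.IsMaximal → x ∈ (m • ⊤ : Submodule R M) := by
    intro m hm
    have h0 : (Submodule.mapQ (m • ⊤ : Submodule R M) (m • ⊤ : Submodule R N) F
        (by rw [← Submodule.map_le_iff_le_comap, Submodule.map_smul'']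
            exact Submodule.smul_mono le_rfl le_top))
        (Submodule.Quotient.mk x) = 0 := by
      rw [Submodule.mapQ_apply, hx, Submodule.Quotient.mk_eq_zero]
      exact Submodule.zero_mem _
    rw [← map_zero (Submodule.mapQ (m • ⊤ : Submodule R M) (m • ⊤ : Submodule R N) F (by rw [← Submodule.map_le_iff_le_comap, Submodule.map_smul'']; exact Submodule.smul_mono le_rfl le_top))] at h0
    have := hfib m hm h0
    rwa [Submodule.Quotient.mk_eq_zero] at this
  -- use a basis to conclude x = 0
  let b := Module.Free.chooseBasis R M
  have hrepr : ∀ i, b.repr x i = 0 := by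
    intro i
    have : b.repr x i ∈ (⊥ : Ideal R).jacobson := by
      rw [Ideal.jacobson]
      refine Ideal.mem_sInf.mpr fun {J} hJ' => ?_
      exact repr_mem_of_mem_smul_top b J (hmem J hJ'.2) i
    rwa [hJ, Ideal.mem_bot] at this
  have : b.repr x = 0 := Finsupp.ext hrepr
  have hx0 : x = 0 := by
    have := congrArg b.repr.symm this
    simpa using this
  simp [hx0]
end
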